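/- Let T be an n × n real matrix whose spectral bound is negative, i.e. every complex eigenvalue of T has strictly negative real part. Then T is invertible, the function a ↦ exp(aT) is integrable on [0,∞), and −T^{−1} = ∫_0^∞ exp(aT) da, where exp denotes the matrix exponential. -/

import Mathlib

open MeasureTheory

namespace Stmt19Aux

open NormedSpace Matrix Filter

attribute [local instance] Matrix.linftyOpNormedRing Matrix.linftyOpNormedAlgebra

noncomputable section

variable {n : ℕ}

lemma exp_smul_one (c : ℂ) :
    exp (c • (1 : Matrix (Fin n) (Fin n) ℂ)) = Complex.exp c • 1 := by
  have h' : exp (algebraMap ℂ (Matrix (Fin n) (Fin n) ℂ) c)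
      = algebraMap ℂ (Matrix (Fin n) (Fin n) ℂ) (exp c) :=
    (map_exp (algebraMap ℂ (Matrix (Fin n) (Fin n) ℂ)) (continuous_algebraMap _ _) c).symm
  rw [← Algebra.algebraMap_eq_smul_one, h', ← Complex.exp_eq_exp_ℂ, Algebra.algebraMap_eq_smul_one]

lemma pow_exp_bound (m : ℕ) {δ : ℝ} (hδ : 0 < δ) :
    ∃ C : ℝ, 0 ≤ C ∧ ∀ a : ℝ, 0 ≤ a → a ^ m * Real.exp (-(δ * a)) ≤ C := by
  set g : ℝ → ℝ := fun x => x ^ m * Real.exp (-x) with hg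
  have htend := Real.tendsto_pow_mul_exp_neg_atTop_nhds_zero m
  have hcont : Continuous g := (continuous_pow m).mul (Real.continuous_exp.comp continuous_neg)
  obtain ⟨A, hA⟩ : ∃ A : ℝ, ∀ x ≥ A, g x ≤ 1 := by
    have := htend.eventually (eventually_le_nhds (by norm_num : (0:ℝ) < 1))
    exact this.exists_forall_of_atTop
  obtain ⟨B, hB⟩ := (isCompact_Icc (a := (0:ℝ)) (b := A)).exists_bound_of_continuousOn
    hcont.continuousOn
  refine ⟨max B 1 / δ ^ m, by positivity, fun a ha => ?_⟩
  have key : ∀ x : ℝ, 0 ≤ x → g x ≤ max B 1 := by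
    intro x hx
    rcases le_total x A with h | h
    · exact le_trans (le_abs_self _) (le_max_of_le_left (by simpa using hB x ⟨hx, h⟩))
    · exact le_max_of_le_right (hA x h)
  have h1 : a ^ m * Real.exp (-(δ * a)) = g (δ * a) / δ ^ m := by
    simp only [hg, mul_pow]
    field_simp
  rw [h1]
  gcongr
  exact key _ (by positivity)

lemma exp_mulVec_eq_tsum (X : Matrix (Fin n) (Fin n) ℂ) (w : Fin n → ℂ) :
    exp X *ᵥ w = ∑' m : ℕ, ((m.factorial : ℂ)⁻¹ • (X ^ m *ᵥ w)) := by
  let L : Matrix (Fin n) (Fin n) ℂ →ₗ[ℂ] (Fin n → ℂ) :=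
    { toFun := fun M => M *ᵥ w
      map_add' := fun X Y => Matrix.add_mulVec X Y w
      map_smul' := fun c X => Matrix.smul_mulVec c X w }
  have h := (L.toContinuousLinearMap).map_tsum (NormedSpace.expSeries_summable' (𝕂 := ℂ) X)
  have h0 : exp X *ᵥ w = L.toContinuousLinearMap (exp X) := rfl
  rw [h0, exp_eq_tsum ℂ, h]
  refine tsum_congr fun m => ?_
  rw [_root_.map_smul]
  rfl

lemma exp_mulVec_genEig (A : Matrix (Fin n) (Fin n) ℂ) {μ : ℂ} {w : Fin n → ℂ}
    (hw : w ∈ Module.End.maxGenEigenspace (Matrix.toLinAlgEquiv' A) μ) {α β : ℝ}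
    (hμ : μ.re ≤ α) (hαβ : α < β) :
    ∃ C : ℝ, ∀ a : ℝ, 0 ≤ a → ‖exp ((a : ℂ) • A) *ᵥ w‖ ≤ C * Real.exp (β * a) := by
  obtain ⟨k, hk⟩ := (Module.End.mem_maxGenEigenspace _ _ _).mp hw
  set N : Matrix (Fin n) (Fin n) ℂ := A - μ • 1 with hN
  have hNk : N ^ k *ᵥ w = 0 := by
    have e : Matrix.toLinAlgEquiv' (N ^ k) = (Matrix.toLinAlgEquiv' A - μ • 1) ^ k := by
      rw [map_pow, hN, map_sub, _root_.map_smul, _root_.map_one]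
    have h3 : N ^ k *ᵥ w = Matrix.toLinAlgEquiv' (N ^ k) w :=
      (Matrix.toLinAlgEquiv'_apply _ _).symm
    rw [h3, e]; exact hk
  have hNm : ∀ m, k ≤ m → N ^ m *ᵥ w = 0 := by
    intro m hm
    rw [← Nat.sub_add_cancel hm, pow_add, ← Matrix.mulVec_mulVec, hNk, Matrix.mulVec_zero]
  have hδ : 0 < β - α := sub_pos.mpr hαβ
  choose Cm hCm0 hCm using fun m => pow_exp_bound m hδ
  refine ⟨∑ m ∈ Finset.range k, Cm m * ‖N ^ m *ᵥ w‖, fun a ha => ?_⟩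
  have hAeq : (a : ℂ) • A = (↑a * μ) • (1 : Matrix (Fin n) (Fin n) ℂ) + (a : ℂ) • N := by
    rw [hN, smul_sub, smul_smul]; abel
  have hcomm : Commute ((↑a * μ) • (1 : Matrix (Fin n) (Fin n) ℂ)) ((a : ℂ) • N) :=
    ((Commute.one_left N).smul_left _).smul_right _
  have hsplit : exp ((a : ℂ) • A) = Complex.exp (↑a * μ) • exp ((a : ℂ) • N) := by
    have h' : exp ((↑a * μ) • (1 : Matrix (Fin n) (Fin n) ℂ) + (a : ℂ) • N)
        = exp ((↑a * μ) • (1 : Matrix (Fin n) (Fin n) ℂ)) * exp ((a : ℂ) • N) :=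
      exp_add_of_commute hcomm
    rw [hAeq, h', exp_smul_one, smul_mul_assoc, one_mul]
  have hser : exp ((a : ℂ) • N) *ᵥ w
      = ∑ m ∈ Finset.range k, ((m.factorial : ℂ)⁻¹ * (a:ℂ) ^ m) • (N ^ m *ᵥ w) := by
    rw [exp_mulVec_eq_tsum]
    rw [tsum_eq_sum (s := Finset.range k) ?h]
    · apply Finset.sum_congr rfl
      intro m _
      rw [smul_pow, Matrix.smul_mulVec, smul_smul]
    · intro m hm
      rw [smul_pow, Matrix.smul_mulVec, hNm m (by simpa using hm)]
      simp
  rw [hsplit, Matrix.smul_mulVec, norm_smul, hser]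
  have h1 : ‖Complex.exp (↑a * μ)‖ = Real.exp (a * μ.re) := by
    rw [Complex.norm_exp]
    norm_num
  rw [h1]
  have hterm : ∀ m : ℕ, ‖((m.factorial : ℂ)⁻¹ * (a:ℂ) ^ m) • (N ^ m *ᵥ w)‖
      ≤ a ^ m * ‖N ^ m *ᵥ w‖ := by
    intro m
    rw [norm_smul, norm_mul, norm_inv, norm_pow, Complex.norm_real,
      Real.norm_of_nonneg ha]
    have h4 : ‖(m.factorial : ℂ)‖ = (m.factorial : ℝ) := by simp
    rw [h4]
    have h5 : ((m.factorial : ℝ))⁻¹ ≤ 1 := by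
      rw [inv_le_one_iff₀]
      right
      exact_mod_cast m.factorial_pos
    have h8 : (0:ℝ) ≤ a ^ m := pow_nonneg ha m
    have h9 : (0:ℝ) ≤ ‖N ^ m *ᵥ w‖ := norm_nonneg _
    nlinarith [mul_le_mul_of_nonneg_right h5 h8]
  calc Real.exp (a * μ.re) * ‖∑ m ∈ Finset.range k, ((m.factorial : ℂ)⁻¹ * (a:ℂ) ^ m) • (N ^ m *ᵥ w)‖
      ≤ Real.exp (a * μ.re) * ∑ m ∈ Finset.range k, a ^ m * ‖N ^ m *ᵥ w‖ := by
        apply mul_le_mul_of_nonneg_left _ (Real.exp_nonneg _)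
        exact (norm_sum_le _ _).trans (Finset.sum_le_sum fun m _ => hterm m)
    _ ≤ Real.exp (α * a) * ∑ m ∈ Finset.range k, a ^ m * ‖N ^ m *ᵥ w‖ := by
        apply mul_le_mul_of_nonneg_right (Real.exp_le_exp.mpr ?_)
        · exact Finset.sum_nonneg fun m _ => mul_nonneg (pow_nonneg ha m) (norm_nonneg _)
        · rw [mul_comm a μ.re]
          exact mul_le_mul_of_nonneg_right hμ ha
    _ = ∑ m ∈ Finset.range k, ‖N ^ m *ᵥ w‖ * (a ^ m * Real.exp (-((β - α) * a))) * Real.exp (β * a) := by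
        rw [Finset.mul_sum]
        refine Finset.sum_congr rfl fun m _ => ?_
        rw [show α * a = -((β - α) * a) + β * a by ring, Real.exp_add]
        ring
    _ ≤ ∑ m ∈ Finset.range k, Cm m * ‖N ^ m *ᵥ w‖ * Real.exp (β * a) := by
        refine Finset.sum_le_sum fun m _ => ?_
        have h6 := hCm m a ha
        have h7 : ‖N ^ m *ᵥ w‖ * (a ^ m * Real.exp (-((β - α) * a))) ≤ ‖N ^ m *ᵥ w‖ * Cm m :=
          mul_le_mul_of_nonneg_left h6 (norm_nonneg _)
        rw [mul_comm (Cm m) (‖N ^ m *ᵥ w‖)]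
        exact mul_le_mul_of_nonneg_right h7 (Real.exp_nonneg _)
    _ = (∑ m ∈ Finset.range k, Cm m * ‖N ^ m *ᵥ w‖) * Real.exp (β * a) :=
        (Finset.sum_mul _ _ _).symm

lemma exp_mulVec_decay (A : Matrix (Fin n) (Fin n) ℂ) {α β : ℝ}
    (hspec : ∀ μ ∈ spectrum ℂ A, μ.re ≤ α) (hαβ : α < β) (v : Fin n → ℂ) :
    ∃ C : ℝ, ∀ a : ℝ, 0 ≤ a → ‖exp ((a : ℂ) • A) *ᵥ v‖ ≤ C * Real.exp (β * a) := by
  classical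
  set f := Matrix.toLinAlgEquiv' A with hf
  have htop : v ∈ ⨆ μ : ℂ, Module.End.maxGenEigenspace f μ := by
    rw [Module.End.iSup_maxGenEigenspace_eq_top]; trivial
  obtain ⟨d, hd, hdsum⟩ := (Submodule.mem_iSup_iff_exists_finsupp _ _).mp htop
  have hper : ∀ μ : ℂ, ∃ C : ℝ, ∀ a : ℝ, 0 ≤ a →
      ‖exp ((a : ℂ) • A) *ᵥ d μ‖ ≤ C * Real.exp (β * a) := by
    intro μ
    by_cases h0 : d μ = 0
    · exact ⟨0, fun a ha => by simp [h0, Matrix.mulVec_zero]⟩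
    · have hμspec : μ ∈ spectrum ℂ A := by
        rw [← AlgEquiv.spectrum_eq (Matrix.toLinAlgEquiv' (R := ℂ) (n := Fin n)) A,
          ← Module.End.hasEigenvalue_iff_mem_spectrum]
        obtain ⟨k, hk⟩ := (Module.End.mem_maxGenEigenspace _ _ _).mp (hd μ)
        have hk0 : k ≠ 0 := by
          rintro rfl; simp at hk; exact h0 hk
        refine Module.End.hasEigenvalue_of_hasGenEigenvalue (k := k) ?_
        rw [Module.End.hasGenEigenvalue_iff]
        intro hbot
        refine h0 ?_
        have : d μ ∈ Module.End.genEigenspace f μ k := by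
          rw [Module.End.mem_genEigenspace_nat, LinearMap.mem_ker]; exact hk
        rw [hbot] at this
        simpa using this
      exact exp_mulVec_genEig A (hd μ) (hspec μ hμspec) hαβ
  choose C hC using hper
  refine ⟨∑ μ ∈ d.support, C μ, fun a ha => ?_⟩
  have hv : v = ∑ μ ∈ d.support, d μ := by rw [← hdsum]; rfl
  have hlin : exp ((a : ℂ) • A) *ᵥ v = ∑ μ ∈ d.support, exp ((a : ℂ) • A) *ᵥ d μ := by
    rw [hv]
    exact map_sum (Matrix.mulVecLin (exp ((a : ℂ) • A))) _ _
  rw [hlin, Finset.sum_mul]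
  exact (norm_sum_le _ _).trans (Finset.sum_le_sum fun μ _ => hC μ a ha)

variable (T : Matrix (Fin n) (Fin n) ℝ)

lemma map_exp_smul (a : ℝ) :
    (exp (a • T)).map (Complex.ofReal : ℝ → ℂ) =
      exp ((a : ℂ) • T.map (Complex.ofReal : ℝ → ℂ)) := by
  have hcont : Continuous ((Complex.ofRealHom.mapMatrix :
      Matrix (Fin n) (Fin n) ℝ →+* Matrix (Fin n) (Fin n) ℂ)) := by
    show Continuous fun M : Matrix (Fin n) (Fin n) ℝ => M.map (Complex.ofReal : ℝ → ℂ)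
    exact continuous_id.matrix_map Complex.continuous_ofReal
  have h := map_exp (Complex.ofRealHom.mapMatrix :
      Matrix (Fin n) (Fin n) ℝ →+* Matrix (Fin n) (Fin n) ℂ) hcont (a • T)
  have h2 : (Complex.ofRealHom.mapMatrix (a • T) : Matrix (Fin n) (Fin n) ℂ)
      = (a : ℂ) • T.map (Complex.ofReal : ℝ → ℂ) := by
    ext i j
    simp [RingHom.mapMatrix_apply, Complex.real_smul]
  calc (exp (a • T)).map (Complex.ofReal : ℝ → ℂ)
      = Complex.ofRealHom.mapMatrix (exp (a • T)) := rfl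
    _ = exp ((a:ℂ) • T.map (Complex.ofReal : ℝ → ℂ)) := by rw [← h2]; exact h
    _ = exp ((a:ℂ) • T.map (Complex.ofReal : ℝ → ℂ)) := by
        rfl

lemma entry_bound (hT : ∀ μ ∈ spectrum ℂ (T.map (Complex.ofReal : ℝ → ℂ)), μ.re < 0) :
    ∃ C β : ℝ, β < 0 ∧ 0 ≤ C ∧ ∀ a : ℝ, 0 ≤ a → ∀ i j,
      |(exp (a • T)) i j| ≤ C * Real.exp (β * a) := by
  classical
  set A := T.map (Complex.ofReal : ℝ → ℂ) with hA
  -- get a negative upper bound α for the real parts of the spectrum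
  obtain ⟨α, hα0, hαb⟩ : ∃ α : ℝ, α < 0 ∧ ∀ μ ∈ spectrum ℂ A, μ.re ≤ α := by
    by_cases hs : (spectrum ℂ A).Nonempty
    · have hcpt : IsCompact (spectrum ℂ A) := spectrum.isCompact A
      have hKc : IsCompact (Complex.re '' spectrum ℂ A) := hcpt.image Complex.continuous_re
      have hKne : (Complex.re '' spectrum ℂ A).Nonempty := hs.image _
      have hmem := hKc.sSup_mem hKne
      obtain ⟨μ₀, hμ₀, hμ₀eq⟩ := hmem
      refine ⟨sSup (Complex.re '' spectrum ℂ A), by rw [← hμ₀eq]; exact hT μ₀ hμ₀, ?_⟩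
      intro μ hμ
      exact le_csSup hKc.bddAbove ⟨μ, hμ, rfl⟩
    · exact ⟨-1, by norm_num, fun μ hμ => absurd ⟨μ, hμ⟩ hs⟩
  have hαβ : α < α / 2 := by linarith
  have hper : ∀ j : Fin n, ∃ C : ℝ, ∀ a : ℝ, 0 ≤ a →
      ‖exp ((a : ℂ) • A) *ᵥ Pi.single j 1‖ ≤ C * Real.exp (α / 2 * a) :=
    fun j => exp_mulVec_decay A hαb hαβ _
  choose C hC using hper
  have hC0 : ∀ j, 0 ≤ C j := by
    intro j
    have := hC j 0 le_rfl
    simp only [Real.exp_zero, mul_one, mul_zero] at this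
    exact (norm_nonneg _).trans this
  refine ⟨∑ j, C j, α / 2, by linarith, Finset.sum_nonneg fun j _ => hC0 j, fun a ha i j => ?_⟩
  have hentry : |(exp (a • T)) i j| = ‖(exp ((a:ℂ) • A)) i j‖ := by
    rw [← map_exp_smul T a]
    simp [Matrix.map_apply, Complex.norm_real]
  rw [hentry]
  have hsingle : (exp ((a:ℂ) • A)) i j = (exp ((a:ℂ) • A) *ᵥ Pi.single j 1) i := by
    rw [Matrix.mulVec_single]
    simp
  rw [hsingle]
  calc ‖(exp ((a:ℂ) • A) *ᵥ Pi.single j 1) i‖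
      ≤ ‖exp ((a:ℂ) • A) *ᵥ Pi.single j 1‖ := norm_le_pi_norm _ i
    _ ≤ C j * Real.exp (α / 2 * a) := hC j a ha
    _ ≤ (∑ j', C j') * Real.exp (α / 2 * a) := by
        apply mul_le_mul_of_nonneg_right _ (Real.exp_nonneg _)
        exact Finset.single_le_sum (fun j' _ => hC0 j') (Finset.mem_univ j)

lemma exp_cont : Continuous fun a : ℝ => exp (a • T) :=
  exp_continuous.comp (continuous_id.smul continuous_const)

lemma entry_cont (i j : Fin n) : Continuous fun a : ℝ => (exp (a • T)) i j := by
  have := ((continuous_apply j).comp ((continuous_apply (A := fun _ : Fin n => Fin n → ℝ) i).comp (exp_cont T)))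
  exact this

lemma entry_deriv (hdet : IsUnit T.det) (i j : Fin n) (a : ℝ) :
    HasDerivAt (fun t : ℝ => (T⁻¹ * exp (t • T)) i j) ((exp (a • T)) i j) a := by
  have h := hasDerivAt_exp_smul_const (𝕂 := ℝ) T a
  let ℓ : Matrix (Fin n) (Fin n) ℝ →ₗ[ℝ] ℝ :=
    { toFun := fun M => (T⁻¹ * M) i j
      map_add' := fun X Y => by show (T⁻¹ * (X + Y)) i j = _; rw [mul_add]; rfl
      map_smul' := fun c X => by show (T⁻¹ * (c • X)) i j = _; rw [mul_smul_comm]; rfl }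
  have hd := (ℓ.toContinuousLinearMap.hasFDerivAt).comp_hasDerivAt a h
  have he : (T⁻¹ * (exp (a • T) * T)) i j = (exp (a • T)) i j := by
    have hcT : Commute T (exp (a • T)) := ((Commute.refl T).smul_right a).exp_right
    rw [← hcT.eq, ← mul_assoc, Matrix.nonsing_inv_mul T hdet, one_mul]
  have hd2 : HasDerivAt (fun t : ℝ => (T⁻¹ * exp (t • T)) i j)
      ((T⁻¹ * (exp (a • T) * T)) i j) a := hd
  rw [he] at hd2
  exact hd2

lemma entry_inv_tendsto {C β : ℝ} (hβ : β < 0)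
    (hbd : ∀ a : ℝ, 0 ≤ a → ∀ i j, |(exp (a • T)) i j| ≤ C * Real.exp (β * a))
    (i j : Fin n) :
    Tendsto (fun a : ℝ => (T⁻¹ * exp (a • T)) i j) atTop (nhds 0) := by
  have hexp : Tendsto (fun a : ℝ => C * Real.exp (β * a)) atTop (nhds 0) := by
    rw [show (0:ℝ) = C * 0 by ring]
    refine Tendsto.const_mul C ?_
    have : Tendsto (fun a : ℝ => β * a) atTop atBot :=
      Tendsto.const_mul_atTop_of_neg hβ tendsto_id
    exact Real.tendsto_exp_atBot.comp this
  have hentry : ∀ k l, Tendsto (fun a : ℝ => (exp (a • T)) k l) atTop (nhds 0) := by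
    intro k l
    apply squeeze_zero_norm' _ hexp
    filter_upwards [eventually_ge_atTop (0:ℝ)] with a ha
    exact hbd a ha k l
  have : (fun a : ℝ => (T⁻¹ * exp (a • T)) i j)
      = fun a : ℝ => ∑ k, T⁻¹ i k * (exp (a • T)) k j := by
    funext a; rw [Matrix.mul_apply]
  rw [this]
  rw [show (0:ℝ) = ∑ k : Fin n, T⁻¹ i k * 0 by simp]
  exact tendsto_finset_sum _ fun k _ => (hentry k j).const_mul _

lemma entry_integrableOn {C β : ℝ} (hβ : β < 0)
    (hbd : ∀ a : ℝ, 0 ≤ a → ∀ i j, |(exp (a • T)) i j| ≤ C * Real.exp (β * a))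
    (i j : Fin n) :
    IntegrableOn (fun a : ℝ => (exp (a • T)) i j) (Set.Ioi 0) volume := by
  have hg : IntegrableOn (fun a : ℝ => C * Real.exp (-(-β) * a)) (Set.Ioi (0:ℝ)) volume :=
    (exp_neg_integrableOn_Ioi 0 (by linarith : 0 < -β)).const_mul C
  refine Integrable.mono' hg ((entry_cont T i j).aestronglyMeasurable.restrict) ?_
  rw [ae_restrict_iff' measurableSet_Ioi]
  filter_upwards with a ha
  rw [Real.norm_eq_abs, neg_neg]
  exact hbd a (le_of_lt ha) i j

lemma entry_integral (hdet : IsUnit T.det) {C β : ℝ} (hβ : β < 0)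
    (hbd : ∀ a : ℝ, 0 ≤ a → ∀ i j, |(exp (a • T)) i j| ≤ C * Real.exp (β * a))
    (i j : Fin n) :
    ∫ a in Set.Ioi (0:ℝ), (exp (a • T)) i j = -(T⁻¹ i j) := by
  have h := integral_Ioi_of_hasDerivAt_of_tendsto'
    (f := fun t : ℝ => (T⁻¹ * exp (t • T)) i j)
    (fun x _ => entry_deriv T hdet i j x)
    (entry_integrableOn T hβ hbd i j)
    (entry_inv_tendsto T hβ hbd i j)
  rw [h]
  have h0 : exp ((0:ℝ) • T) = 1 := by rw [zero_smul, exp_zero]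
  simp only [h0, mul_one]
  ring

end

end Stmt19Aux

attribute [local instance] Matrix.normedAddCommGroup Matrix.normedSpace

theorem stmt19 (n : ℕ) (T : Matrix (Fin n) (Fin n) ℝ)
    (hT : ∀ μ ∈ spectrum ℂ (T.map (Complex.ofReal : ℝ → ℂ)), μ.re < 0) :
    IsUnit T ∧
    @IntegrableOn _ _ _ _ SeminormedAddGroup.toContinuousENorm (fun a : ℝ => NormedSpace.exp (a • T)) (Set.Ici 0) volume ∧
    -T⁻¹ = ∫ a in Set.Ici (0 : ℝ), NormedSpace.exp (a • T) := by
  classical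
  -- invertibility
  have hdet : IsUnit T.det := by
    rw [isUnit_iff_ne_zero]
    intro h0
    have hdetA : (T.map (Complex.ofReal : ℝ → ℂ)).det = 0 := by
      have hmd := RingHom.map_det Complex.ofRealHom T
      rw [h0] at hmd
      exact hmd.symm.trans (map_zero _)
    have hnu : ¬ IsUnit (T.map (Complex.ofReal : ℝ → ℂ)) := by
      rw [Matrix.isUnit_iff_isUnit_det, hdetA]
      exact not_isUnit_zero
    have h0mem : (0:ℂ) ∈ spectrum ℂ (T.map (Complex.ofReal : ℝ → ℂ)) :=
      (spectrum.zero_mem_iff (R := ℂ)).mpr hnu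
    have := hT 0 h0mem
    simp at this
  have hunit : IsUnit T := (Matrix.isUnit_iff_isUnit_det T).mpr hdet
  -- decay bound
  obtain ⟨C, β, hβ, hC0, hbd⟩ := Stmt19Aux.entry_bound T hT
  -- integrability
  have hgIoi : IntegrableOn (fun a : ℝ => C * Real.exp (-(-β) * a)) (Set.Ioi (0:ℝ)) volume :=
    (exp_neg_integrableOn_Ioi 0 (by linarith : 0 < -β)).const_mul C
  have hcontE : Continuous fun a : ℝ => NormedSpace.exp (a • T) := Stmt19Aux.exp_cont T
  haveI : TopologicalSpace.PseudoMetrizableSpace (Matrix (Fin n) (Fin n) ℝ) :=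
    PseudoEMetricSpace.pseudoMetrizableSpace
  have hint : @IntegrableOn _ _ _ _ SeminormedAddGroup.toContinuousENorm (fun a : ℝ => NormedSpace.exp (a • T)) (Set.Ici 0) volume := by
    have hg : IntegrableOn (fun a : ℝ => C * Real.exp (-(-β) * a)) (Set.Ici (0:ℝ)) volume := by
      rwa [integrableOn_Ici_iff_integrableOn_Ioi]
    refine Integrable.mono' hg hcontE.aestronglyMeasurable.restrict ?_
    rw [ae_restrict_iff' measurableSet_Ici]
    filter_upwards with a ha
    rw [neg_neg]
    refine (Matrix.norm_le_iff (by positivity)).mpr fun i j => ?_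
    rw [Real.norm_eq_abs]
    exact hbd a ha i j
  refine ⟨hunit, hint, ?_⟩
  have hintIoi : @IntegrableOn _ _ _ _ SeminormedAddGroup.toContinuousENorm (fun a : ℝ => NormedSpace.exp (a • T)) (Set.Ioi 0) volume :=
    hint.mono_set Set.Ioi_subset_Ici_self
  rw [MeasureTheory.integral_Ici_eq_integral_Ioi]
  ext i j
  let ℓ : Matrix (Fin n) (Fin n) ℝ →ₗ[ℝ] ℝ :=
    { toFun := fun M => M i j
      map_add' := fun X Y => rfl
      map_smul' := fun c X => rfl }
  have hcomm := ContinuousLinearMap.integral_comp_comm ℓ.toContinuousLinearMap hintIoi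
  have hRHS : (∫ a in Set.Ioi (0:ℝ), NormedSpace.exp (a • T)) i j
      = ∫ a in Set.Ioi (0:ℝ), (NormedSpace.exp (a • T)) i j :=
    calc (∫ a in Set.Ioi (0:ℝ), NormedSpace.exp (a • T)) i j
        = ℓ.toContinuousLinearMap (∫ a in Set.Ioi (0:ℝ), NormedSpace.exp (a • T)) := rfl
      _ = ∫ a in Set.Ioi (0:ℝ), ℓ.toContinuousLinearMap (NormedSpace.exp (a • T)) := hcomm.symm
      _ = ∫ a in Set.Ioi (0:ℝ), (NormedSpace.exp (a • T)) i j := rfl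
  rw [hRHS, Stmt19Aux.entry_integral T hdet hβ hbd i j]
  rw [Matrix.neg_apply]
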